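/- Target system under the backstepping transformation: suppose X : [t0,infinity) -> R^n is continuously differentiable and satisfies X'(t) = A X(t) + B u(0,t), where u(x,t) = U(phi(t + x (sigma(t) - t))) is the actual actuator state, u_hat(x,t) = U(t + D_hat (x - 1)) is the estimated actuator state, u_tilde(x,t) = u(x,t) - u_hat(x,t) is the observer error, U satisfies the predictor feedback U(t) = K ( e^{A D_hat} X(t) + integral from t - D_hat to t of e^{A(t - theta)} B U(theta) d theta ), and delta satisfies Assumption A and Assumption B. Define w_hat(x,t) = u_hat(x,t) - K e^{A D_hat x} X(t) - D_hat * integral from 0 to x of K e^{A D_hat (x - y)} B u_hat(y,t) dy. Then: (i) X'(t) = (A + B K) X(t) + B w_hat(0,t) + B u_tilde(0,t); (ii) D_hat * w_hat_t(x,t) = w_hat_x(x,t) - D_hat K e^{A D_hat x} B u_tilde(0,t) and w_hat(1,t) = 0; (iii) u_tilde_t(x,t) = pi(x,t) u_tilde_x(x,t) - (1 - D_hat pi(x,t)) r(x,t) and u_tilde(1,t) = 0, where pi(x,t) = (1 + x (sigma'(t) - 1)) / (sigma(t) - t) and r(x,t) = (1/D_hat) w_hat_x(x,t) + K e^{(A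 + B K) D_hat x}(A + B K) X(t) + K B w_hat(x,t) + D_hat K (A + B K) * integral from 0 to x of e^{(A + B K) D_hat (x - y)} B w_hat(y,t) dy; (iv) D_hat * w_hat_{x t}(x,t) = w_hat_{x x}(x,t) - D_hat^2 K e^{A D_hat x} A B u_tilde(0,t) and w_hat_x(1,t) = D_hat K e^{A D_hat} B u_tilde(0,t). -/

import Mathlib

open Matrix MeasureTheory intervalIntegral Set

noncomputable section

namespace LBTS

variable {n : ℕ}

lemma hda_conv {E : Type*} [NormedAddCommGroup E] [NormedSpace ℝ E] {f : ℝ → E} {a b : E}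
    {x : ℝ} (h : HasDerivAt f b x) (e : a = b) : HasDerivAt f a x := e ▸ h

def Ex (A : Matrix (Fin n) (Fin n) ℝ) (s : ℝ) : Matrix (Fin n) (Fin n) ℝ :=
  NormedSpace.exp (s • A)

lemma Ex_add (A : Matrix (Fin n) (Fin n) ℝ) (s r : ℝ) : Ex A (s + r) = Ex A s * Ex A r := by
  rw [Ex, Ex, Ex, add_smul]
  exact Matrix.exp_add_of_commute _ _ (((Commute.refl A).smul_left s).smul_right r)

lemma Ex_zero (A : Matrix (Fin n) (Fin n) ℝ) : Ex A 0 = 1 := by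
  rw [Ex, zero_smul]; exact NormedSpace.exp_zero

lemma Ex_mul_neg (A : Matrix (Fin n) (Fin n) ℝ) (s : ℝ) : Ex A s * Ex A (-s) = 1 := by
  rw [← Ex_add, add_neg_cancel, Ex_zero]

lemma Ex_comm (A : Matrix (Fin n) (Fin n) ℝ) (s : ℝ) : A * Ex A s = Ex A s * A :=
  ((Commute.refl A).smul_right s).exp_right

lemma vecMulVec_mulVec (B K v : Fin n → ℝ) :
    (vecMulVec B K).mulVec v = (K ⬝ᵥ v) • B := by
  funext i
  simp only [Matrix.mulVec, dotProduct, Matrix.vecMulVec_apply, Pi.smul_apply, smul_eq_mul]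
  rw [Finset.sum_mul]
  exact Finset.sum_congr rfl fun j _ => by ring

lemma hasDerivAt_Ex_entry (A : Matrix (Fin n) (Fin n) ℝ) (c d s : ℝ) (i j : Fin n) :
    HasDerivAt (fun x => Ex A (c * x + d) i j) (c * ((Ex A (c * s + d) * A) i j)) s := by
  letI : SeminormedRing (Matrix (Fin n) (Fin n) ℝ) := Matrix.linftyOpSemiNormedRing
  letI : NormedRing (Matrix (Fin n) (Fin n) ℝ) := Matrix.linftyOpNormedRing
  letI : NormedAlgebra ℝ (Matrix (Fin n) (Fin n) ℝ) := Matrix.linftyOpNormedAlgebra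
  have h1 : HasDerivAt (fun u : ℝ => NormedSpace.exp (u • A))
      (NormedSpace.exp ((c * s + d) • A) * A) (c * s + d) := hasDerivAt_exp_smul_const A _
  have h2 : HasDerivAt (fun x : ℝ => c * x + d) c s :=
    by simpa using ((hasDerivAt_id s).const_mul c).add_const d
  have h3 := h1.scomp s h2
  let L : Matrix (Fin n) (Fin n) ℝ →ₗ[ℝ] ℝ :=
    { toFun := fun M => M i j, map_add' := fun _ _ => rfl, map_smul' := fun _ _ => rfl }
  have h4 := (LinearMap.toContinuousLinearMap L).hasFDerivAt.comp_hasDerivAt s h3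
  exact h4

lemma continuous_Ex_entry (A : Matrix (Fin n) (Fin n) ℝ) (i j : Fin n) :
    Continuous fun s => Ex A s i j := by
  rw [continuous_iff_continuousAt]
  intro s
  have h := (hasDerivAt_Ex_entry A 1 0 s i j).continuousAt
  simpa using h

lemma continuous_Ex_mulVec (A : Matrix (Fin n) (Fin n) ℝ) (v : Fin n → ℝ) :
    Continuous fun s => (Ex A s).mulVec v := by
  apply continuous_pi
  intro i
  simp only [Matrix.mulVec, dotProduct]
  exact continuous_finset_sum _ fun j _ => (continuous_Ex_entry A i j).mul continuous_const

/-- the primitive `J`. -/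
def J (A : Matrix (Fin n) (Fin n) ℝ) (B : Fin n → ℝ) (U : ℝ → ℝ) (r : ℝ) : Fin n → ℝ :=
  ∫ θ in (0:ℝ)..r, U θ • (Ex A (-θ)).mulVec B

lemma continuous_J_integrand (A : Matrix (Fin n) (Fin n) ℝ) (B : Fin n → ℝ) {U : ℝ → ℝ}
    (hU : Continuous U) : Continuous fun θ => U θ • (Ex A (-θ)).mulVec B :=
  hU.smul ((continuous_Ex_mulVec A B).comp continuous_neg)

lemma hasDerivAt_J (A : Matrix (Fin n) (Fin n) ℝ) (B : Fin n → ℝ) {U : ℝ → ℝ}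
    (hU : Continuous U) (r : ℝ) :
    HasDerivAt (J A B U) (U r • (Ex A (-r)).mulVec B) r := by
  have hc := continuous_J_integrand A B hU
  exact intervalIntegral.integral_hasDerivAt_right (hc.intervalIntegrable _ _)
    (hc.stronglyMeasurableAtFilter _ _) hc.continuousAt

lemma continuous_J (A : Matrix (Fin n) (Fin n) ℝ) (B : Fin n → ℝ) {U : ℝ → ℝ}
    (hU : Continuous U) : Continuous (J A B U) := by
  rw [continuous_iff_continuousAt]
  exact fun r => (hasDerivAt_J A B hU r).continuousAt



-- Part B

lemma hasDerivAt_Ex_mul_entry (A R : Matrix (Fin n) (Fin n) ℝ) (c d s : ℝ) (i j : Fin n) :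
    HasDerivAt (fun x => (Ex A (c * x + d) * R) i j) (c * ((Ex A (c * s + d) * A * R) i j)) s := by
  simp only [Matrix.mul_apply]
  have h := HasDerivAt.fun_sum (u := Finset.univ)
    (fun k _ => (hasDerivAt_Ex_entry A c d s i k).mul_const (R k j))
  refine hda_conv (h) ?_
  simp only [Matrix.mul_apply, Finset.mul_sum]
  refine Finset.sum_congr rfl fun k _ => ?_
  simp only [Finset.sum_mul, Finset.mul_sum]
  exact Finset.sum_congr rfl fun l _ => by ring

lemma hasDerivAt_Ex_mul_mulVec (A R : Matrix (Fin n) (Fin n) ℝ) (c d : ℝ)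
    {G : ℝ → Fin n → ℝ} {g' : Fin n → ℝ} {s : ℝ} (hG : HasDerivAt G g' s) :
    HasDerivAt (fun x => (Ex A (c * x + d) * R).mulVec (G x))
      (c • ((Ex A (c * s + d) * A * R).mulVec (G s)) + (Ex A (c * s + d) * R).mulVec g') s := by
  rw [hasDerivAt_pi]
  intro i
  have hGj : ∀ j, HasDerivAt (fun x => G x j) (g' j) s := fun j => hasDerivAt_pi.1 hG j
  have h := HasDerivAt.fun_sum (u := Finset.univ)
    (fun k _ => (hasDerivAt_Ex_mul_entry A R c d s i k).mul (hGj k))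
  have hfun : (fun x => ((Ex A (c * x + d) * R).mulVec (G x)) i)
      = fun x => ∑ k, (Ex A (c * x + d) * R) i k * G x k := by
    funext x; simp [Matrix.mulVec, dotProduct]
  rw [hfun]
  refine hda_conv (h) ?_
  simp only [Pi.add_apply, Pi.smul_apply, smul_eq_mul, Matrix.mulVec, dotProduct,
    Finset.mul_sum, ← Finset.sum_add_distrib]
  exact Finset.sum_congr rfl fun k _ => by ring

lemma hasDerivAt_K_Ex_mul_mulVec (A R : Matrix (Fin n) (Fin n) ℝ) (K : Fin n → ℝ) (c d : ℝ)
    {G : ℝ → Fin n → ℝ} {g' : Fin n → ℝ} {s : ℝ} (hG : HasDerivAt G g' s) :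
    HasDerivAt (fun x => K ⬝ᵥ (Ex A (c * x + d) * R).mulVec (G x))
      (c * (K ⬝ᵥ (Ex A (c * s + d) * A * R).mulVec (G s))
        + K ⬝ᵥ (Ex A (c * s + d) * R).mulVec g') s := by
  have h := hasDerivAt_Ex_mul_mulVec A R c d hG
  let L : (Fin n → ℝ) →ₗ[ℝ] ℝ :=
    { toFun := fun v => K ⬝ᵥ v, map_add' := fun a b => dotProduct_add _ _ _,
      map_smul' := fun r v => by simp [dotProduct_smul] }
  have h4 := (LinearMap.toContinuousLinearMap L).hasFDerivAt.comp_hasDerivAt s h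
  simpa [L, Function.comp_def, dotProduct_add, dotProduct_smul, smul_eq_mul] using h4

lemma hasDerivAt_K_Ex_mulVec (A : Matrix (Fin n) (Fin n) ℝ) (K : Fin n → ℝ) (c d : ℝ)
    {G : ℝ → Fin n → ℝ} {g' : Fin n → ℝ} {s : ℝ} (hG : HasDerivAt G g' s) :
    HasDerivAt (fun x => K ⬝ᵥ (Ex A (c * x + d)).mulVec (G x))
      (c * (K ⬝ᵥ (Ex A (c * s + d) * A).mulVec (G s))
        + K ⬝ᵥ (Ex A (c * s + d)).mulVec g') s := by
  simpa [mul_one] using hasDerivAt_K_Ex_mul_mulVec A 1 K c d hG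

lemma K_mulVec_integral (K : Fin n → ℝ) (M : Matrix (Fin n) (Fin n) ℝ)
    {f : ℝ → Fin n → ℝ} {a b : ℝ} (hf : IntervalIntegrable f volume a b) :
    K ⬝ᵥ M.mulVec (∫ y in a..b, f y) = ∫ y in a..b, K ⬝ᵥ M.mulVec (f y) := by
  let L : (Fin n → ℝ) →ₗ[ℝ] ℝ :=
    { toFun := fun v => K ⬝ᵥ M.mulVec v,
      map_add' := fun a b => by simp [Matrix.mulVec_add, dotProduct_add],
      map_smul' := fun r v => by simp [Matrix.mulVec_smul, dotProduct_smul] }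
  exact ((LinearMap.toContinuousLinearMap L).intervalIntegral_comp_comm hf).symm

lemma K_integral (K : Fin n → ℝ) {f : ℝ → Fin n → ℝ} {a b : ℝ}
    (hf : IntervalIntegrable f volume a b) :
    K ⬝ᵥ (∫ y in a..b, f y) = ∫ y in a..b, K ⬝ᵥ f y := by
  have := K_mulVec_integral K 1 hf
  simpa [Matrix.one_mulVec] using this

lemma integral_K_Ex (A : Matrix (Fin n) (Fin n) ℝ) (Bv K : Fin n → ℝ) {U : ℝ → ℝ}
    (hU : Continuous U) (a b : ℝ) :
    ∫ θ in a..b, (K ⬝ᵥ (Ex A (b - θ)).mulVec Bv) * U θ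
      = K ⬝ᵥ (Ex A b).mulVec (J A Bv U b - J A Bv U a) := by
  have hcont : Continuous fun θ => U θ • (Ex A (-θ)).mulVec Bv :=
    hU.smul ((continuous_Ex_mulVec A Bv).comp continuous_neg)
  have h1 : ∀ θ, (K ⬝ᵥ (Ex A (b - θ)).mulVec Bv) * U θ
      = K ⬝ᵥ (Ex A b).mulVec (U θ • (Ex A (-θ)).mulVec Bv) := by
    intro θ
    rw [show b - θ = b + -θ by ring, Ex_add, ← Matrix.mulVec_mulVec]
    rw [Matrix.mulVec_smul, dotProduct_smul]
    simp [mul_comm]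
  simp only [h1]
  have h2 : J A Bv U b - J A Bv U a = ∫ θ in a..b, U θ • (Ex A (-θ)).mulVec Bv := by
    rw [J, J]
    exact intervalIntegral.integral_interval_sub_left
      (hcont.intervalIntegrable _ _) (hcont.intervalIntegrable _ _)
  rw [h2, K_mulVec_integral K _ (hcont.intervalIntegrable _ _)]

lemma K_integral_Ex (A : Matrix (Fin n) (Fin n) ℝ) (Bv K : Fin n → ℝ) {U : ℝ → ℝ}
    (hU : Continuous U) (a b : ℝ) :
    K ⬝ᵥ (∫ θ in a..b, U θ • (NormedSpace.exp ((b - θ) • A)).mulVec Bv)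
      = K ⬝ᵥ (Ex A b).mulVec (J A Bv U b - J A Bv U a) := by
  have hcont : Continuous fun θ => U θ • (Ex A (b - θ)).mulVec Bv := by
    apply hU.smul
    exact (continuous_Ex_mulVec A Bv).comp (by fun_prop)
  rw [show (fun θ => U θ • (NormedSpace.exp ((b - θ) • A)).mulVec Bv)
      = fun θ => U θ • (Ex A (b - θ)).mulVec Bv from rfl]
  rw [K_integral K (hcont.intervalIntegrable _ _), ← integral_K_Ex A Bv K hU a b]
  congr 1
  funext θ
  rw [dotProduct_smul]
  simp [mul_comm]



-- ===================== Part C =====================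

lemma Ex_conj (A : Matrix (Fin n) (Fin n) ℝ) (s : ℝ) : Ex A s * A * Ex A (-s) = A := by
  rw [← Ex_comm, mul_assoc, Ex_mul_neg, mul_one]

lemma Ex_mul_A_mul_Ex (A : Matrix (Fin n) (Fin n) ℝ) (a b : ℝ) :
    Ex A a * A * Ex A b = Ex A (a + b) * A := by
  rw [← Ex_comm, mul_assoc, ← Ex_add, Ex_comm]

/-- value of `K ⬝ᵥ (Ex A a).mulVec (D • (u • (Ex A (-a)).mulVec B))`. -/
lemma K_Ex_smul_cancel (A : Matrix (Fin n) (Fin n) ℝ) (K B : Fin n → ℝ) (a D u : ℝ) :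
    K ⬝ᵥ (Ex A a).mulVec (D • (u • (Ex A (-a)).mulVec B)) = D * (u * (K ⬝ᵥ B)) := by
  rw [Matrix.mulVec_smul, dotProduct_smul, Matrix.mulVec_smul, dotProduct_smul,
    Matrix.mulVec_mulVec, Ex_mul_neg, Matrix.one_mulVec]
  simp

section Wm

variable (A : Matrix (Fin n) (Fin n) ℝ) (B K : Fin n → ℝ) (U : ℝ → ℝ)
  (X : ℝ → Fin n → ℝ) (D : ℝ)

/-- the master form of `ŵ`. -/
def Wm (x t : ℝ) : ℝ :=
  U (t + D * (x - 1)) - K ⬝ᵥ (Ex A (D * x)).mulVec (X t)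
    - K ⬝ᵥ (Ex A (t + D * (x - 1))).mulVec
        (J A B U (t + D * (x - 1)) - J A B U (t - D))

/-- `∂ₓ ŵ`. -/
def Psi (x t : ℝ) : ℝ :=
  D * deriv U (t + D * (x - 1)) - D * (K ⬝ᵥ (Ex A (D * x) * A).mulVec (X t))
    - D * (K ⬝ᵥ (Ex A (t + D * (x - 1)) * A).mulVec
        (J A B U (t + D * (x - 1)) - J A B U (t - D)))
    - D * ((K ⬝ᵥ B) * U (t + D * (x - 1)))

/-- `∂ₜ ŵ` given the derivative `X'` of the plant state. -/
def Phi (X' : Fin n → ℝ) (x t : ℝ) : ℝ :=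
  deriv U (t + D * (x - 1)) - K ⬝ᵥ (Ex A (D * x)).mulVec X'
    - (K ⬝ᵥ (Ex A (t + D * (x - 1)) * A).mulVec
          (J A B U (t + D * (x - 1)) - J A B U (t - D))
        + (U (t + D * (x - 1)) * (K ⬝ᵥ B)
            - U (t - D) * (K ⬝ᵥ (Ex A (D * x)).mulVec B)))

lemma hasDerivAt_Wm_x (hUd : Differentiable ℝ U) (hUc : Continuous U) (x t : ℝ) :
    HasDerivAt (fun y => Wm A B K U X D y t) (Psi A B K U X D x t) x := by
  have e1 : ∀ y : ℝ, t + D * (y - 1) = D * y + (t - D) := fun y => by ring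
  have haff : HasDerivAt (fun y : ℝ => D * y + (t - D)) D x := by
    simpa using ((hasDerivAt_id x).const_mul D).add_const (t - D)
  have h1 : HasDerivAt (fun y => U (D * y + (t - D))) (D * deriv U (D * x + (t - D))) x := by
    have := (hUd (D * x + (t - D))).hasDerivAt.scomp x haff
    simpa [Function.comp_def, smul_eq_mul] using this
  have h2 : HasDerivAt (fun y => K ⬝ᵥ (Ex A (D * y)).mulVec (X t))
      (D * (K ⬝ᵥ (Ex A (D * x) * A).mulVec (X t))) x := by
    have := hasDerivAt_K_Ex_mulVec A K D 0 (hasDerivAt_const x (X t))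
    simpa using this
  have hGJ : HasDerivAt (fun y => J A B U (D * y + (t - D)) - J A B U (t - D))
      (D • (U (D * x + (t - D)) • (Ex A (-(D * x + (t - D)))).mulVec B)) x := by
    have := (hasDerivAt_J A B hUc (D * x + (t - D))).scomp x haff
    simpa [Function.comp_def] using this.sub_const (J A B U (t - D))
  have h3 := hasDerivAt_K_Ex_mulVec A K D (t - D) hGJ
  have hfun : (fun y => Wm A B K U X D y t)
      = fun y => U (D * y + (t - D)) - K ⬝ᵥ (Ex A (D * y)).mulVec (X t)
          - K ⬝ᵥ (Ex A (D * y + (t - D))).mulVec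
              (J A B U (D * y + (t - D)) - J A B U (t - D)) := by
    funext y; simp only [Wm, e1]
  rw [hfun]
  refine hda_conv ((h1.sub h2).sub h3) ?_
  simp only [Psi, e1, K_Ex_smul_cancel]
  ring

lemma hasDerivAt_Wm_t (hUd : Differentiable ℝ U) (hUc : Continuous U)
    {X' : Fin n → ℝ} {t : ℝ} (hX : HasDerivAt X X' t) (x : ℝ) :
    HasDerivAt (fun s => Wm A B K U X D x s) (Phi A B K U D X' x t) t := by
  have haff : HasDerivAt (fun s : ℝ => s + D * (x - 1)) 1 t := by
    simpa using (hasDerivAt_id t).add_const (D * (x - 1))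
  have haff' : HasDerivAt (fun s : ℝ => s - D) 1 t := by
    simpa using (hasDerivAt_id t).sub_const D
  have h1 : HasDerivAt (fun s => U (s + D * (x - 1))) (deriv U (t + D * (x - 1))) t := by
    have := (hUd (t + D * (x - 1))).hasDerivAt.scomp t haff
    simpa [Function.comp_def] using this
  have h2 : HasDerivAt (fun s => K ⬝ᵥ (Ex A (D * x)).mulVec (X s))
      (K ⬝ᵥ (Ex A (D * x)).mulVec X') t := by
    have := hasDerivAt_K_Ex_mulVec A K 0 (D * x) hX
    simpa using this
  have hGJ : HasDerivAt (fun s => J A B U (s + D * (x - 1)) - J A B U (s - D))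
      (U (t + D * (x - 1)) • (Ex A (-(t + D * (x - 1)))).mulVec B
        - U (t - D) • (Ex A (-(t - D))).mulVec B) t := by
    have ha := (hasDerivAt_J A B hUc (t + D * (x - 1))).scomp t haff
    have hb := (hasDerivAt_J A B hUc (t - D)).scomp t haff'
    simpa [Function.comp_def] using ha.fun_sub hb
  have h3 := hasDerivAt_K_Ex_mulVec A K 1 (D * (x - 1)) (by simpa [one_mul] using hGJ)
  simp only [one_mul] at h3
  have hfun : (fun s => Wm A B K U X D x s)
      = fun s => U (s + D * (x - 1)) - K ⬝ᵥ (Ex A (D * x)).mulVec (X s)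
          - K ⬝ᵥ (Ex A (s + D * (x - 1))).mulVec
              (J A B U (s + D * (x - 1)) - J A B U (s - D)) := rfl
  rw [hfun]
  refine hda_conv ((h1.sub h2).sub h3) ?_
  have c1 : K ⬝ᵥ (Ex A (t + D * (x - 1))).mulVec
      (U (t + D * (x - 1)) • (Ex A (-(t + D * (x - 1)))).mulVec B
        - U (t - D) • (Ex A (-(t - D))).mulVec B)
      = U (t + D * (x - 1)) * (K ⬝ᵥ B)
        - U (t - D) * (K ⬝ᵥ (Ex A (D * x)).mulVec B) := by
    rw [Matrix.mulVec_sub, dotProduct_sub, Matrix.mulVec_smul, dotProduct_smul,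
      Matrix.mulVec_smul, dotProduct_smul, Matrix.mulVec_mulVec, Matrix.mulVec_mulVec,
      Ex_mul_neg, Matrix.one_mulVec]
    rw [show Ex A (t + D * (x - 1)) * Ex A (-(t - D)) = Ex A (D * x) by
      rw [← Ex_add]; ring_nf]
    simp
  simp only [Phi]
  rw [← c1]
  ring


lemma K_ExR_smul_cancel (A : Matrix (Fin n) (Fin n) ℝ) (K B : Fin n → ℝ) (a D u : ℝ) :
    K ⬝ᵥ (Ex A a * A).mulVec (D • (u • (Ex A (-a)).mulVec B))
      = D * (u * (K ⬝ᵥ A.mulVec B)) := by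
  rw [Matrix.mulVec_smul, dotProduct_smul, Matrix.mulVec_smul, dotProduct_smul,
    Matrix.mulVec_mulVec, Ex_conj]
  simp

/-- `∂ₓ∂ₓ ŵ`. -/
def PsiX (x t : ℝ) : ℝ :=
  D ^ 2 * deriv (deriv U) (t + D * (x - 1))
    - D ^ 2 * (K ⬝ᵥ (Ex A (D * x) * A * A).mulVec (X t))
    - (D ^ 2 * (K ⬝ᵥ (Ex A (t + D * (x - 1)) * A * A).mulVec
          (J A B U (t + D * (x - 1)) - J A B U (t - D)))
        + D ^ 2 * (U (t + D * (x - 1)) * (K ⬝ᵥ A.mulVec B)))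
    - D ^ 2 * ((K ⬝ᵥ B) * deriv U (t + D * (x - 1)))

/-- `∂ₜ∂ₓ ŵ`. -/
def PsiT (X' : Fin n → ℝ) (x t : ℝ) : ℝ :=
  D * deriv (deriv U) (t + D * (x - 1)) - D * (K ⬝ᵥ (Ex A (D * x) * A).mulVec X')
    - (D * (K ⬝ᵥ (Ex A (t + D * (x - 1)) * A * A).mulVec
          (J A B U (t + D * (x - 1)) - J A B U (t - D)))
        + D * (U (t + D * (x - 1)) * (K ⬝ᵥ A.mulVec B)
            - U (t - D) * (K ⬝ᵥ (Ex A (D * x) * A).mulVec B)))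
    - D * ((K ⬝ᵥ B) * deriv U (t + D * (x - 1)))

lemma hasDerivAt_Psi_x (hUd : Differentiable ℝ U) (hU2d : Differentiable ℝ (deriv U))
    (hUc : Continuous U) (x t : ℝ) :
    HasDerivAt (fun y => Psi A B K U X D y t) (PsiX A B K U X D x t) x := by
  have e1 : ∀ y : ℝ, t + D * (y - 1) = D * y + (t - D) := fun y => by ring
  have haff : HasDerivAt (fun y : ℝ => D * y + (t - D)) D x := by
    simpa using ((hasDerivAt_id x).const_mul D).add_const (t - D)
  have h1 : HasDerivAt (fun y => D * deriv U (D * y + (t - D)))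
      (D * (D * deriv (deriv U) (D * x + (t - D)))) x := by
    have := ((hU2d (D * x + (t - D))).hasDerivAt.scomp x haff).const_mul D
    simpa [Function.comp_def, smul_eq_mul] using this
  have h2 : HasDerivAt (fun y => D * (K ⬝ᵥ (Ex A (D * y) * A).mulVec (X t)))
      (D * (D * (K ⬝ᵥ (Ex A (D * x) * A * A).mulVec (X t)))) x := by
    have := (hasDerivAt_K_Ex_mul_mulVec A A K D 0 (hasDerivAt_const x (X t))).const_mul D
    simpa using this
  have hGJ : HasDerivAt (fun y => J A B U (D * y + (t - D)) - J A B U (t - D))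
      (D • (U (D * x + (t - D)) • (Ex A (-(D * x + (t - D)))).mulVec B)) x := by
    have := (hasDerivAt_J A B hUc (D * x + (t - D))).scomp x haff
    simpa [Function.comp_def] using this.sub_const (J A B U (t - D))
  have h3 := (hasDerivAt_K_Ex_mul_mulVec A A K D (t - D) hGJ).const_mul D
  have h4 : HasDerivAt (fun y => D * ((K ⬝ᵥ B) * U (D * y + (t - D))))
      (D * ((K ⬝ᵥ B) * (D * deriv U (D * x + (t - D))))) x := by
    have := (((hUd (D * x + (t - D))).hasDerivAt.scomp x haff).const_mul (K ⬝ᵥ B)).const_mul D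
    simpa [Function.comp_def, smul_eq_mul, mul_assoc] using this
  have hfun : (fun y => Psi A B K U X D y t)
      = fun y => D * deriv U (D * y + (t - D)) - D * (K ⬝ᵥ (Ex A (D * y) * A).mulVec (X t))
          - D * (K ⬝ᵥ (Ex A (D * y + (t - D)) * A).mulVec
              (J A B U (D * y + (t - D)) - J A B U (t - D)))
          - D * ((K ⬝ᵥ B) * U (D * y + (t - D))) := by
    funext y; simp only [Psi, e1]
  rw [hfun]
  refine hda_conv (((h1.sub h2).sub h3).sub h4) ?_
  simp only [PsiX, e1, K_ExR_smul_cancel]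
  ring

lemma hasDerivAt_Psi_t (hUd : Differentiable ℝ U) (hU2d : Differentiable ℝ (deriv U))
    (hUc : Continuous U) {X' : Fin n → ℝ} {t : ℝ} (hX : HasDerivAt X X' t) (x : ℝ) :
    HasDerivAt (fun s => Psi A B K U X D x s) (PsiT A B K U D X' x t) t := by
  have haff : HasDerivAt (fun s : ℝ => s + D * (x - 1)) 1 t := by
    simpa using (hasDerivAt_id t).add_const (D * (x - 1))
  have haff' : HasDerivAt (fun s : ℝ => s - D) 1 t := by
    simpa using (hasDerivAt_id t).sub_const D
  have h1 : HasDerivAt (fun s => D * deriv U (s + D * (x - 1)))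
      (D * deriv (deriv U) (t + D * (x - 1))) t := by
    have := ((hU2d (t + D * (x - 1))).hasDerivAt.scomp t haff).const_mul D
    simpa [Function.comp_def] using this
  have h2 : HasDerivAt (fun s => D * (K ⬝ᵥ (Ex A (D * x) * A).mulVec (X s)))
      (D * (K ⬝ᵥ (Ex A (D * x) * A).mulVec X')) t := by
    have := (hasDerivAt_K_Ex_mul_mulVec A A K 0 (D * x) hX).const_mul D
    simpa using this
  have hGJ : HasDerivAt (fun s => J A B U (s + D * (x - 1)) - J A B U (s - D))
      (U (t + D * (x - 1)) • (Ex A (-(t + D * (x - 1)))).mulVec B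
        - U (t - D) • (Ex A (-(t - D))).mulVec B) t := by
    have ha := (hasDerivAt_J A B hUc (t + D * (x - 1))).scomp t haff
    have hb := (hasDerivAt_J A B hUc (t - D)).scomp t haff'
    simpa [Function.comp_def] using ha.fun_sub hb
  have h3 := (hasDerivAt_K_Ex_mul_mulVec A A K 1 (D * (x - 1))
    (by simpa [one_mul] using hGJ)).const_mul D
  simp only [one_mul] at h3
  have h4 : HasDerivAt (fun s => D * ((K ⬝ᵥ B) * U (s + D * (x - 1))))
      (D * ((K ⬝ᵥ B) * deriv U (t + D * (x - 1)))) t := by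
    have := (((hUd (t + D * (x - 1))).hasDerivAt.scomp t haff).const_mul (K ⬝ᵥ B)).const_mul D
    simpa [Function.comp_def] using this
  have hfun : (fun s => Psi A B K U X D x s)
      = fun s => D * deriv U (s + D * (x - 1)) - D * (K ⬝ᵥ (Ex A (D * x) * A).mulVec (X s))
          - D * (K ⬝ᵥ (Ex A (s + D * (x - 1)) * A).mulVec
              (J A B U (s + D * (x - 1)) - J A B U (s - D)))
          - D * ((K ⬝ᵥ B) * U (s + D * (x - 1))) := rfl
  rw [hfun]
  refine hda_conv (((h1.sub h2).sub h3).sub h4) ?_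
  have c1 : K ⬝ᵥ (Ex A (t + D * (x - 1)) * A).mulVec
      (U (t + D * (x - 1)) • (Ex A (-(t + D * (x - 1)))).mulVec B
        - U (t - D) • (Ex A (-(t - D))).mulVec B)
      = U (t + D * (x - 1)) * (K ⬝ᵥ A.mulVec B)
        - U (t - D) * (K ⬝ᵥ (Ex A (D * x) * A).mulVec B) := by
    rw [Matrix.mulVec_sub, dotProduct_sub, Matrix.mulVec_smul, dotProduct_smul,
      Matrix.mulVec_smul, dotProduct_smul, Matrix.mulVec_mulVec, Matrix.mulVec_mulVec,
      Ex_conj]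
    rw [show Ex A (t + D * (x - 1)) * A * Ex A (-(t - D)) = Ex A (D * x) * A by
      rw [Ex_mul_A_mul_Ex]; ring_nf]
    simp
  simp only [PsiT]
  rw [← c1]
  ring

end Wm


-- ===================== Part E =====================

section Wm2
variable (A : Matrix (Fin n) (Fin n) ℝ) (B K : Fin n → ℝ) (U : ℝ → ℝ)
  (X : ℝ → Fin n → ℝ) (D : ℝ)

lemma wh_eq_Wm (hD : D ≠ 0) (hUc : Continuous U) {uh wh : ℝ → ℝ → ℝ}
    (huh : ∀ x t, uh x t = U (t + D * (x - 1)))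
    (hwh : ∀ x t, wh x t
      = uh x t - K ⬝ᵥ (NormedSpace.exp ((D * x) • A)).mulVec (X t)
        - D * ∫ y in (0 : ℝ)..x,
            (K ⬝ᵥ (NormedSpace.exp ((D * (x - y)) • A)).mulVec B) * uh y t) :
    ∀ x t, wh x t = Wm A B K U X D x t := by
  intro x t
  rw [hwh, huh]
  have e2 : ∀ y : ℝ, (K ⬝ᵥ (NormedSpace.exp ((D * (x - y)) • A)).mulVec B) * uh y t
      = (K ⬝ᵥ (Ex A ((t + D * (x - 1)) - (D * y + (t - D)))).mulVec B) * U (D * y + (t - D)) := by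
    intro y
    rw [huh]
    rw [show t + D * (x - 1) - (D * y + (t - D)) = D * (x - y) by ring,
      show D * y + (t - D) = t + D * (y - 1) by ring]
    rfl
  simp only [e2]
  have h3 := intervalIntegral.integral_comp_mul_add (a := (0:ℝ)) (b := x)
    (fun θ => (K ⬝ᵥ (Ex A ((t + D * (x - 1)) - θ)).mulVec B) * U θ) hD (t - D)
  rw [h3]
  rw [show D * 0 + (t - D) = t - D by ring, show D * x + (t - D) = t + D * (x - 1) by ring]
  rw [integral_K_Ex A B K hUc (t - D) (t + D * (x - 1))]
  rw [smul_eq_mul, ← mul_assoc, mul_inv_cancel₀ hD, one_mul]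
  rfl

lemma Wm_boundary (hUc : Continuous U) {t : ℝ}
    (hfbt : U t = K ⬝ᵥ ((NormedSpace.exp (D • A)).mulVec (X t)
        + ∫ θ in (t - D)..t, U θ • (NormedSpace.exp ((t - θ) • A)).mulVec B)) :
    Wm A B K U X D 1 t = 0 := by
  have e : t + D * (1 - 1) = t := by ring
  simp only [Wm, e, mul_one]
  rw [hfbt, dotProduct_add, K_integral_Ex A B K hUc (t - D) t]
  rw [show (NormedSpace.exp (D • A)) = Ex A D from rfl]
  ring

lemma hasDerivAt_unique_of_eq_on_Ici {f g : ℝ → ℝ} {a b t : ℝ}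
    (hf : HasDerivAt f a t) (hg : HasDerivAt g b t) (h : ∀ s, t ≤ s → f s = g s) : a = b := by
  have h1 := hf.hasDerivWithinAt (s := Ici t)
  have h2 : HasDerivWithinAt f b (Ici t) t :=
    (hg.hasDerivWithinAt (s := Ici t)).congr (fun s hs => h s hs) (h t le_rfl)
  rw [← h1.derivWithin (uniqueDiffOn_Ici t t self_mem_Ici),
    ← h2.derivWithin (uniqueDiffOn_Ici t t self_mem_Ici)]

lemma derivU_eq (hUd : Differentiable ℝ U) (hUc : Continuous U) {t t0 : ℝ} (ht : t0 ≤ t)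
    {X' : Fin n → ℝ} (hX : HasDerivAt X X' t)
    (hfb : ∀ s, t0 ≤ s →
      U s = K ⬝ᵥ ((NormedSpace.exp (D • A)).mulVec (X s)
        + ∫ θ in (s - D)..s, U θ • (NormedSpace.exp ((s - θ) • A)).mulVec B)) :
    deriv U t = K ⬝ᵥ (Ex A D).mulVec X'
      + (K ⬝ᵥ (Ex A t * A).mulVec (J A B U t - J A B U (t - D))
        + (U t * (K ⬝ᵥ B) - U (t - D) * (K ⬝ᵥ (Ex A D).mulVec B))) := by
  set F : ℝ → ℝ := fun s => K ⬝ᵥ (Ex A D).mulVec (X s)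
    + K ⬝ᵥ (Ex A s).mulVec (J A B U s - J A B U (s - D)) with hF
  have haff' : HasDerivAt (fun s : ℝ => s - D) 1 t := by
    simpa using (hasDerivAt_id t).sub_const D
  have h2a : HasDerivAt (fun s => K ⬝ᵥ (Ex A D).mulVec (X s)) (K ⬝ᵥ (Ex A D).mulVec X') t := by
    have := hasDerivAt_K_Ex_mulVec A K 0 D hX
    simpa using this
  have hGJ : HasDerivAt (fun s => J A B U s - J A B U (s - D))
      (U t • (Ex A (-t)).mulVec B - U (t - D) • (Ex A (-(t - D))).mulVec B) t := by
    have ha := hasDerivAt_J A B hUc t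
    have hb := (hasDerivAt_J A B hUc (t - D)).scomp t haff'
    simpa [Function.comp_def] using ha.fun_sub hb
  have h2b := hasDerivAt_K_Ex_mulVec A K 1 0 (by simpa using hGJ)
  simp only [one_mul, add_zero] at h2b
  have hFd : HasDerivAt F (K ⬝ᵥ (Ex A D).mulVec X'
      + (K ⬝ᵥ (Ex A t * A).mulVec (J A B U t - J A B U (t - D))
        + (U t * (K ⬝ᵥ B) - U (t - D) * (K ⬝ᵥ (Ex A D).mulVec B)))) t := by
    have := h2a.add h2b
    refine hda_conv (this) ?_
    have c1 : K ⬝ᵥ (Ex A t).mulVec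
        (U t • (Ex A (-t)).mulVec B - U (t - D) • (Ex A (-(t - D))).mulVec B)
        = U t * (K ⬝ᵥ B) - U (t - D) * (K ⬝ᵥ (Ex A D).mulVec B) := by
      rw [Matrix.mulVec_sub, dotProduct_sub, Matrix.mulVec_smul, dotProduct_smul,
        Matrix.mulVec_smul, dotProduct_smul, Matrix.mulVec_mulVec, Matrix.mulVec_mulVec,
        Ex_mul_neg, Matrix.one_mulVec]
      rw [show Ex A t * Ex A (-(t - D)) = Ex A D by rw [← Ex_add]; ring_nf]
      simp
    rw [← c1]
    ring
  have heq : ∀ s, t ≤ s → U s = F s := by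
    intro s hs
    rw [hfb s (le_trans ht hs), dotProduct_add, K_integral_Ex A B K hUc (s - D) s, hF]
    rfl
  exact hasDerivAt_unique_of_eq_on_Ici (hUd t).hasDerivAt hFd heq

end Wm2

-- ===================== Yv machinery =====================

section Yv
variable (Mt : Matrix (Fin n) (Fin n) ℝ) (Bv v0 : Fin n → ℝ) (f : ℝ → ℝ) (D : ℝ)

def Pp (x : ℝ) : Fin n → ℝ := v0 + D • ∫ y in (0:ℝ)..x, f y • (Ex Mt (-(D * y))).mulVec Bv

def Yv (x : ℝ) : Fin n → ℝ := (Ex Mt (D * x)).mulVec (Pp Mt Bv v0 f D x)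

lemma continuous_Pp_integrand (hf : Continuous f) :
    Continuous fun y => f y • (Ex Mt (-(D * y))).mulVec Bv :=
  hf.smul ((continuous_Ex_mulVec Mt Bv).comp (by fun_prop))

lemma hasDerivAt_Pp (hf : Continuous f) (x : ℝ) :
    HasDerivAt (Pp Mt Bv v0 f D) (D • (f x • (Ex Mt (-(D * x))).mulVec Bv)) x := by
  have hcont := continuous_Pp_integrand Mt Bv f D hf
  have h := intervalIntegral.integral_hasDerivAt_right (a := (0:ℝ)) (b := x)
    (hcont.intervalIntegrable _ _) (hcont.stronglyMeasurableAtFilter _ _) hcont.continuousAt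
  unfold Pp
  exact (HasDerivAt.const_smul D h).const_add v0

lemma hasDerivAt_Yv (hf : Continuous f) (x : ℝ) :
    HasDerivAt (Yv Mt Bv v0 f D)
      (D • (Mt.mulVec (Yv Mt Bv v0 f D x) + f x • Bv)) x := by
  have h := hasDerivAt_Ex_mul_mulVec Mt 1 D 0 (hasDerivAt_Pp Mt Bv v0 f D hf x)
  simp only [mul_one, add_zero] at h
  refine hda_conv (h) ?_
  simp only [Yv]
  rw [Matrix.mulVec_mulVec, Ex_comm]
  rw [Matrix.mulVec_smul, Matrix.mulVec_smul, Matrix.mulVec_mulVec, Ex_mul_neg,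
    Matrix.one_mulVec, smul_add]

lemma K_S_Yv (S : Matrix (Fin n) (Fin n) ℝ) (K : Fin n → ℝ) (hf : Continuous f) (x : ℝ) :
    K ⬝ᵥ S.mulVec (Yv Mt Bv v0 f D x)
      = K ⬝ᵥ (S * Ex Mt (D * x)).mulVec v0
        + D * ∫ y in (0:ℝ)..x, (K ⬝ᵥ (S * Ex Mt (D * (x - y))).mulVec Bv) * f y := by
  have hcont := continuous_Pp_integrand Mt Bv f D hf
  rw [Yv, Pp, Matrix.mulVec_mulVec, Matrix.mulVec_add, dotProduct_add]
  congr 1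
  rw [Matrix.mulVec_smul, dotProduct_smul, smul_eq_mul]
  congr 1
  rw [K_mulVec_integral K _ (hcont.intervalIntegrable _ _)]
  apply intervalIntegral.integral_congr
  intro y _
  simp only [Matrix.mulVec_smul, dotProduct_smul, smul_eq_mul, Matrix.mulVec_mulVec,
    show D * (x - y) = D * x + -(D * y) by ring, Ex_add, ← Matrix.mul_assoc]
  ring

lemma Yv_unique (D : ℝ) {Z Y : ℝ → Fin n → ℝ} {g : ℝ → Fin n → ℝ}
    (hZ : ∀ x, HasDerivAt Z (D • (Mt.mulVec (Z x) + g x)) x)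
    (hY : ∀ x, HasDerivAt Y (D • (Mt.mulVec (Y x) + g x)) x)
    (h0 : Z 0 = Y 0) : ∀ x, Z x = Y x := by
  set W : ℝ → Fin n → ℝ := fun x => Z x - Y x with hW
  have hWd : ∀ x, HasDerivAt W (D • Mt.mulVec (W x)) x := by
    intro x
    have := (hZ x).sub (hY x)
    refine hda_conv (this) ?_
    rw [hW]
    simp only [Matrix.mulVec_sub, smul_sub, smul_add]
    abel
  have hg : ∀ x, HasDerivAt (fun y => (Ex Mt (-D * y)).mulVec (W y)) 0 x := by
    intro x
    have h := hasDerivAt_Ex_mul_mulVec Mt 1 (-D) 0 (hWd x)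
    simp only [mul_one, add_zero] at h
    convert h using 1
    rw [Matrix.mulVec_smul, Matrix.mulVec_mulVec, neg_smul, neg_add_cancel]
  intro x
  have h1 : (Ex Mt (-D * x)).mulVec (W x) = (Ex Mt (-D * 0)).mulVec (W 0) :=
    is_const_of_deriv_eq_zero (fun y => (hg y).differentiableAt)
      (fun y => (hg y).deriv) x 0
  rw [show (-D : ℝ) * 0 = 0 by ring, Ex_zero, Matrix.one_mulVec] at h1
  have h2 : W 0 = 0 := by simp only [hW]; simp [h0]
  rw [h2] at h1
  have h3 : W x = 0 := by
    have h4 := congrArg (fun v => (Ex Mt (D * x)).mulVec v) h1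
    simp only [Matrix.mulVec_mulVec, Matrix.mulVec_zero] at h4
    rw [show Ex Mt (D * x) * Ex Mt (-D * x) = 1 by
      rw [show (-D : ℝ) * x = -(D * x) by ring]; exact Ex_mul_neg Mt (D * x),
      Matrix.one_mulVec] at h4
    exact h4
  simp only [hW] at h3
  exact sub_eq_zero.mp h3

end Yv


-- ===================== extra aux =====================

lemma hasDerivAt_K_dot (K : Fin n → ℝ) {G : ℝ → Fin n → ℝ} {g' : Fin n → ℝ} {s : ℝ}
    (hG : HasDerivAt G g' s) : HasDerivAt (fun x => K ⬝ᵥ G x) (K ⬝ᵥ g') s := by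
  let L : (Fin n → ℝ) →ₗ[ℝ] ℝ :=
    { toFun := fun v => K ⬝ᵥ v, map_add' := fun a b => dotProduct_add _ _ _,
      map_smul' := fun r v => by simp [dotProduct_smul] }
  have h4 := (LinearMap.toContinuousLinearMap L).hasFDerivAt.comp_hasDerivAt s hG
  simpa [L, Function.comp_def] using h4

lemma hasDerivAt_U_affine {U : ℝ → ℝ} (hUd : Differentiable ℝ U) (a b x : ℝ) :
    HasDerivAt (fun y => U (a * y + b)) (a * deriv U (a * x + b)) x := by
  have haff : HasDerivAt (fun y : ℝ => a * y + b) a x := by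
    simpa using ((hasDerivAt_id x).const_mul a).add_const b
  have := (hUd (a * x + b)).hasDerivAt.scomp x haff
  simpa [Function.comp_def, smul_eq_mul] using this

lemma Yv_zero (Mt : Matrix (Fin n) (Fin n) ℝ) (Bv v0 : Fin n → ℝ) (f : ℝ → ℝ) (D : ℝ) :
    Yv Mt Bv v0 f D 0 = v0 := by
  simp [Yv, Pp, show D * (0:ℝ) = 0 by ring, Ex_zero, Matrix.one_mulVec,
    intervalIntegral.integral_same]

lemma K_Yv (Mt : Matrix (Fin n) (Fin n) ℝ) (Bv v0 : Fin n → ℝ) (f : ℝ → ℝ) (D : ℝ)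
    (K : Fin n → ℝ) (hf : Continuous f) (x : ℝ) :
    K ⬝ᵥ Yv Mt Bv v0 f D x
      = K ⬝ᵥ (Ex Mt (D * x)).mulVec v0
        + D * ∫ y in (0:ℝ)..x, (K ⬝ᵥ (Ex Mt (D * (x - y))).mulVec Bv) * f y := by
  have h := K_S_Yv Mt Bv v0 f D 1 K hf x
  simpa [Matrix.one_mulVec, one_mul] using h

end LBTS
open LBTS

/-- The target system obtained under the linear backstepping transformation
(Lemma 6): the transformed plant, the transport PDEs for the transformed
actuator state `ŵ`, the observer error `ũ`, and for `ŵ_x`. -/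
theorem linear_backstepping_target_system
    (n : ℕ) (A : Matrix (Fin n) (Fin n) ℝ) (B K : Fin n → ℝ) (D : ℝ) (hD : 0 < D)
    (t0 : ℝ) (δ σ : ℝ → ℝ) (hδ : ContDiff ℝ 1 δ) (hσdiff : Differentiable ℝ σ)
    -- σ is the inverse of the delayed time φ(t) = t - D̂ - δ(t)
    (hσ : ∀ t, σ t - D - δ (σ t) = t)
    (hσ' : ∀ t, σ (t - D - δ t) = t)
    -- Assumption A
    (hA1 : ∀ t, t0 ≤ t → deriv δ t < 1)
    (hA2 : 0 < (sSup ((fun θ => 1 - deriv δ θ) '' Ici (σ t0)))⁻¹)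
    -- Assumption B
    (hB1 : ∀ t, t0 ≤ t → 0 < D + δ t)
    (hB2 : 0 < (sSup ((fun θ => D + δ θ) '' Ici (σ t0)))⁻¹)
    (U : ℝ → ℝ) (hU : ContDiff ℝ 2 U)
    (X : ℝ → Fin n → ℝ)
    (u uh ut wh : ℝ → ℝ → ℝ)
    -- the actual actuator state u(x,t) = U(φ(t + x (σ(t) - t)))
    (hu : ∀ x t, u x t
      = U ((t + x * (σ t - t)) - D - δ (t + x * (σ t - t))))
    -- the estimated actuator state û(x,t) = U(t + D̂ (x - 1))
    (huh : ∀ x t, uh x t = U (t + D * (x - 1)))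
    -- the observer error ũ = u - û
    (hut : ∀ x t, ut x t = u x t - uh x t)
    -- the plant X'(t) = A X(t) + B u(0,t)
    (hplant : ∀ t, t0 ≤ t → HasDerivAt X (A.mulVec (X t) + u 0 t • B) t)
    -- the predictor feedback
    (hfb : ∀ t, t0 ≤ t →
      U t = K ⬝ᵥ ((NormedSpace.exp (D • A)).mulVec (X t)
        + ∫ θ in (t - D)..t, U θ • (NormedSpace.exp ((t - θ) • A)).mulVec B))
    -- the backstepping transformation
    (hwh : ∀ x t, wh x t
      = uh x t - K ⬝ᵥ (NormedSpace.exp ((D * x) • A)).mulVec (X t)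
        - D * ∫ y in (0 : ℝ)..x,
            (K ⬝ᵥ (NormedSpace.exp ((D * (x - y)) • A)).mulVec B) * uh y t) :
    -- the transport coefficient and the perturbation signal
    ∀ (pi r : ℝ → ℝ → ℝ),
      (∀ x t, pi x t = (1 + x * (deriv σ t - 1)) / (σ t - t)) →
      (∀ x t, r x t
        = (1 / D) * deriv (fun y => wh y t) x
          + K ⬝ᵥ ((NormedSpace.exp ((D * x) • (A + vecMulVec B K)))
              * (A + vecMulVec B K)).mulVec (X t)
          + (K ⬝ᵥ B) * wh x t
          + D * ∫ y in (0 : ℝ)..x,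
              (K ⬝ᵥ (((A + vecMulVec B K)
                * NormedSpace.exp ((D * (x - y)) • (A + vecMulVec B K))).mulVec B))
                * wh y t) →
      ∀ t, t0 ≤ t →
        -- (i) the transformed plant
        (HasDerivAt X ((A + vecMulVec B K).mulVec (X t)
            + wh 0 t • B + ut 0 t • B) t)
        ∧
        -- (ii) the transport PDE for ŵ with boundary condition ŵ(1,t) = 0
        ((∀ x ∈ Icc (0 : ℝ) 1,
          D * deriv (fun s => wh x s) t
            = deriv (fun y => wh y t) x
              - D * (K ⬝ᵥ (NormedSpace.exp ((D * x) • A)).mulVec B) * ut 0 t)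
          ∧ wh 1 t = 0)
        ∧
        -- (iii) the transport PDE for ũ with boundary condition ũ(1,t) = 0
        ((∀ x ∈ Icc (0 : ℝ) 1,
          deriv (fun s => ut x s) t
            = pi x t * deriv (fun y => ut y t) x
              - (1 - D * pi x t) * r x t)
          ∧ ut 1 t = 0)
        ∧
        -- (iv) the transport PDE for ŵ_x with its boundary condition
        ((∀ x ∈ Icc (0 : ℝ) 1,
          D * deriv (fun s => deriv (fun y => wh y s) x) t
            = deriv (fun y => deriv (fun z => wh z t) y) x
              - D ^ 2 * (K ⬝ᵥ ((NormedSpace.exp ((D * x) • A)) * A).mulVec B)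
                  * ut 0 t)
          ∧ deriv (fun y => wh y t) 1
              = D * (K ⬝ᵥ (NormedSpace.exp (D • A)).mulVec B) * ut 0 t) := by
  intro pi r hpi hr t ht
  have hDne : D ≠ 0 := ne_of_gt hD
  have hUc : Continuous U := hU.continuous
  have hUd : Differentiable ℝ U := hU.differentiable (by norm_num)
  have hU2d : Differentiable ℝ (deriv U) := by
    have h2 := (contDiff_succ_iff_deriv (n := 1) (f := U)).mp (by rw [one_add_one_eq_two]; exact hU)
    exact h2.2.2.differentiable (by norm_num)
  have hδd : Differentiable ℝ δ := hδ.differentiable (by norm_num)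
  have hX' : HasDerivAt X (A.mulVec (X t) + u 0 t • B) t := hplant t ht
  have eEx : ∀ (M : Matrix (Fin n) (Fin n) ℝ) (s : ℝ),
      NormedSpace.exp (s • M) = Ex M s := fun _ _ => rfl
  have wh_eq : ∀ x s, wh x s = Wm A B K U X D x s := wh_eq_Wm A B K U X D hDne hUc huh hwh
  have hfx : ∀ s, (fun y => wh y s) = fun y => Wm A B K U X D y s :=
    fun s => funext fun y => wh_eq y s
  have derivx : ∀ x s, deriv (fun y => wh y s) x = Psi A B K U X D x s := by
    intro x s
    rw [hfx s]
    exact (hasDerivAt_Wm_x A B K U X D hUd hUc x s).deriv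
  have ut0 : ut 0 t = u 0 t - U (t - D) := by
    rw [hut, huh, show t + D * ((0:ℝ) - 1) = t - D by ring]
  have wh0 : wh 0 t = U (t - D) - K ⬝ᵥ X t := by
    rw [wh_eq]
    simp only [Wm]
    rw [show t + D * ((0:ℝ) - 1) = t - D by ring, show D * (0:ℝ) = 0 by ring, Ex_zero,
      Matrix.one_mulVec]
    simp
  have part1 : HasDerivAt X ((A + vecMulVec B K).mulVec (X t) + wh 0 t • B + ut 0 t • B) t := by
    convert hX' using 1
    rw [Matrix.add_mulVec, LBTS.vecMulVec_mulVec, wh0, ut0]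
    have hs1 : (K ⬝ᵥ X t) • B + ((U (t - D) - K ⬝ᵥ X t) • B + (u 0 t - U (t - D)) • B)
        = u 0 t • B := by
      rw [← add_smul, ← add_smul]
      congr 1
      ring
    rw [add_assoc, add_assoc, hs1]
  refine ⟨part1, ⟨?_, ?_⟩, ⟨?_, ?_⟩, ⟨?_, ?_⟩⟩
  · -- (ii) PDE
    intro x _
    have derivt : deriv (fun s => wh x s) t
        = Phi A B K U D (A.mulVec (X t) + u 0 t • B) x t := by
      have hft : (fun s => wh x s) = fun s => Wm A B K U X D x s := funext fun s => wh_eq x s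
      rw [hft]
      exact (hasDerivAt_Wm_t A B K U X D hUd hUc hX' x).deriv
    rw [derivt, derivx x t, ut0, eEx]
    have hsplit : K ⬝ᵥ (Ex A (D * x)).mulVec (A.mulVec (X t) + u 0 t • B)
        = K ⬝ᵥ (Ex A (D * x) * A).mulVec (X t)
          + u 0 t * (K ⬝ᵥ (Ex A (D * x)).mulVec B) := by
      rw [Matrix.mulVec_add, dotProduct_add, Matrix.mulVec_smul, dotProduct_smul,
        Matrix.mulVec_mulVec]
      simp
    simp only [Phi, Psi, hsplit]
    ring
  · -- (ii) boundary
    rw [wh_eq]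
    exact Wm_boundary A B K U X D hUc (hfb t ht)
  · -- (iii) PDE
    set Mt := A + vecMulVec B K with hMt
    have contuh : Continuous fun y => uh y t := by
      have hh : (fun y => uh y t) = fun y => U (t + D * (y - 1)) := funext fun y => huh y t
      rw [hh]
      fun_prop
    have contwh : Continuous fun y => wh y t := by
      rw [hfx t, continuous_iff_continuousAt]
      exact fun y => (hasDerivAt_Wm_x A B K U X D hUd hUc y t).continuousAt
    set Zf := Yv A B (X t) (fun y => uh y t) D with hZf
    set Yf := Yv Mt B (X t) (fun y => wh y t) D with hYf
    have hZuh : ∀ x, wh x t = uh x t - K ⬝ᵥ Zf x := by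
      intro x
      rw [hZf, K_Yv A B (X t) (fun y => uh y t) D K contuh x, hwh x t]
      simp only [eEx]
      ring
    have hZd : ∀ x, HasDerivAt Zf (D • (Mt.mulVec (Zf x) + wh x t • B)) x := by
      intro x
      have h := hasDerivAt_Yv A B (X t) (fun y => uh y t) D contuh x
      rw [← hZf] at h
      convert h using 1
      rw [hMt, Matrix.add_mulVec, LBTS.vecMulVec_mulVec]
      rw [show wh x t • B = uh x t • B - (K ⬝ᵥ Zf x) • B by rw [hZuh x, sub_smul]]
      congr 1
      abel
    have hYd : ∀ x, HasDerivAt Yf (D • (Mt.mulVec (Yf x) + wh x t • B)) x :=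
      fun x => hasDerivAt_Yv Mt B (X t) (fun y => wh y t) D contwh x
    have hZY : ∀ x, Zf x = Yf x :=
      Yv_unique Mt D hZd hYd (by rw [hZf, hYf, Yv_zero, Yv_zero])
    have huhx : ∀ x : ℝ, HasDerivAt (fun y => uh y t) (D * deriv U (t + D * (x - 1))) x := by
      intro x
      have h := hasDerivAt_U_affine hUd D (t - D) x
      rw [show D * x + (t - D) = t + D * (x - 1) by ring] at h
      have hh : (fun y => uh y t) = fun y => U (D * y + (t - D)) := by
        funext y; rw [huh, show t + D * (y - 1) = D * y + (t - D) by ring]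
      rw [hh]
      exact h
    have hr_eq : ∀ x, r x t = deriv U (t + D * (x - 1)) := by
      intro x
      have hRwh : HasDerivAt (fun y => wh y t) (Psi A B K U X D x t) x := by
        rw [hfx t]; exact hasDerivAt_Wm_x A B K U X D hUd hUc x t
      have hRY : HasDerivAt (fun y => K ⬝ᵥ Yf y)
          (K ⬝ᵥ (D • (Mt.mulVec (Yf x) + wh x t • B))) x := hasDerivAt_K_dot K (hYd x)
      have hfun2 : (fun y => uh y t) = fun y => wh y t + K ⬝ᵥ Yf y := by
        funext y
        rw [hZuh y, hZY y]
        ring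
      have huniq : D * deriv U (t + D * (x - 1))
          = Psi A B K U X D x t + K ⬝ᵥ (D • (Mt.mulVec (Yf x) + wh x t • B)) :=
        (huhx x).unique (by rw [hfun2]; exact hRwh.add hRY)
      have hKs : K ⬝ᵥ (D • (Mt.mulVec (Yf x) + wh x t • B))
          = D * (K ⬝ᵥ Mt.mulVec (Yf x)) + D * (wh x t * (K ⬝ᵥ B)) := by
        rw [dotProduct_smul, smul_eq_mul, dotProduct_add, dotProduct_smul, smul_eq_mul]
        ring
      have hKMY := K_S_Yv Mt B (X t) (fun y => wh y t) D Mt K contwh x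
      rw [hr x t, derivx x t]
      simp only [eEx]
      rw [show K ⬝ᵥ (Ex Mt (D * x) * Mt).mulVec (X t)
          = K ⬝ᵥ (Mt * Ex Mt (D * x)).mulVec (X t) by rw [Ex_comm]]
      have hPsi : Psi A B K U X D x t
          = D * deriv U (t + D * (x - 1)) - D * (K ⬝ᵥ Mt.mulVec (Yf x))
            - D * (wh x t * (K ⬝ᵥ B)) := by
        rw [hKs] at huniq
        linarith
      rw [hPsi]
      rw [← hYf] at hKMY
      rw [show (∫ y in (0:ℝ)..x, (K ⬝ᵥ (Mt * Ex Mt (D * (x - y))).mulVec B) * wh y t)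
          = K ⬝ᵥ Mt.mulVec (Yv Mt B (X t) (fun y => wh y t) D x) / D
            - (K ⬝ᵥ (Mt * Ex Mt (D * x)).mulVec (X t)) / D by
        rw [hKMY]; field_simp; ring]
      rw [← hYf]
      field_simp
      ring
    intro x _
    have hq : HasDerivAt (fun y : ℝ => t + y * (σ t - t)) (σ t - t) x := by
      simpa using ((hasDerivAt_id x).mul_const (σ t - t)).const_add t
    set q := t + x * (σ t - t) with hqdef
    have hφ : HasDerivAt (fun z : ℝ => z - D - δ z) (1 - deriv δ q) q := by
      simpa using ((hasDerivAt_id q).sub_const D).fun_sub (hδd q).hasDerivAt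
    have hux : HasDerivAt (fun y => u y t)
        ((σ t - t) * ((1 - deriv δ q) * deriv U (q - D - δ q))) x := by
      have h1 := (hUd (q - D - δ q)).hasDerivAt.scomp q hφ
      have h2 := h1.scomp x hq
      have hh : (fun y => u y t)
          = (fun z => U (z - D - δ z)) ∘ (fun y => t + y * (σ t - t)) := by
        funext y
        rw [hu]
        rfl
      rw [hh]
      simpa [Function.comp_def, smul_eq_mul] using h2
    have hutx : HasDerivAt (fun y => ut y t)
        ((σ t - t) * ((1 - deriv δ q) * deriv U (q - D - δ q))
          - D * deriv U (t + D * (x - 1))) x := by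
      have hh : (fun y => ut y t) = fun y => u y t - uh y t := funext fun y => hut y t
      rw [hh]
      exact hux.sub (huhx x)
    have hqt : HasDerivAt (fun s : ℝ => s + x * (σ s - s)) (1 + x * (deriv σ t - 1)) t := by
      have hs := (hσdiff t).hasDerivAt
      simpa using (hasDerivAt_id t).fun_add ((hs.fun_sub (hasDerivAt_id t)).const_mul x)
    have hut' : HasDerivAt (fun s => u x s)
        ((1 + x * (deriv σ t - 1)) * ((1 - deriv δ q) * deriv U (q - D - δ q))) t := by
      have h1 := (hUd (q - D - δ q)).hasDerivAt.scomp q hφ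
      have h2 := h1.scomp t hqt
      have hh : (fun s => u x s)
          = (fun z => U (z - D - δ z)) ∘ (fun s => s + x * (σ s - s)) := by
        funext s
        rw [hu]
        rfl
      rw [hh]
      simpa [Function.comp_def, smul_eq_mul] using h2
    have huht : HasDerivAt (fun s => uh x s) (deriv U (t + D * (x - 1))) t := by
      have h := hasDerivAt_U_affine hUd 1 (D * (x - 1)) t
      have hh : (fun s => uh x s) = fun s => U (1 * s + D * (x - 1)) := by
        funext s; rw [huh, one_mul]
      rw [hh]
      simpa using h
    have hutt : HasDerivAt (fun s => ut x s)
        ((1 + x * (deriv σ t - 1)) * ((1 - deriv δ q) * deriv U (q - D - δ q))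
          - deriv U (t + D * (x - 1))) t := by
      have hh : (fun s => ut x s) = fun s => u x s - uh x s := funext fun s => hut x s
      rw [hh]
      exact hut'.sub huht
    have hσne : σ t - t ≠ 0 := by
      intro h0
      have h1 := hσ t
      have h2 : σ t = t := by linarith
      rw [h2] at h1
      have := hB1 t ht
      linarith
    rw [hutt.deriv, hutx.deriv, hpi x t, hr_eq x]
    field_simp
    ring
  · -- (iii) boundary
    rw [hut, hu, huh]
    rw [show t + 1 * (σ t - t) = σ t by ring, hσ t, show t + D * ((1:ℝ) - 1) = t by ring,
      sub_self]
  · -- (iv) PDE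
    intro x _
    have derivt2 : deriv (fun s => deriv (fun y => wh y s) x) t
        = PsiT A B K U D (A.mulVec (X t) + u 0 t • B) x t := by
      have hh : (fun s => deriv (fun y => wh y s) x) = fun s => Psi A B K U X D x s :=
        funext fun s => derivx x s
      rw [hh]
      exact (hasDerivAt_Psi_t A B K U X D hUd hU2d hUc hX' x).deriv
    have derivx2 : deriv (fun y => deriv (fun z => wh z t) y) x = PsiX A B K U X D x t := by
      have hh : (fun y => deriv (fun z => wh z t) y) = fun y => Psi A B K U X D y t :=
        funext fun y => derivx y t
      rw [hh]
      exact (hasDerivAt_Psi_x A B K U X D hUd hU2d hUc x t).deriv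
    rw [derivt2, derivx2, ut0, eEx]
    have hsplit2 : K ⬝ᵥ (Ex A (D * x) * A).mulVec (A.mulVec (X t) + u 0 t • B)
        = K ⬝ᵥ (Ex A (D * x) * A * A).mulVec (X t)
          + u 0 t * (K ⬝ᵥ (Ex A (D * x) * A).mulVec B) := by
      rw [Matrix.mulVec_add, dotProduct_add, Matrix.mulVec_smul, dotProduct_smul,
        Matrix.mulVec_mulVec]
      simp [Matrix.mul_assoc]
    simp only [PsiT, PsiX, hsplit2]
    ring
  · -- (iv) boundary
    rw [derivx 1 t]
    have hder := derivU_eq A B K U X D hUd hUc ht hX' hfb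
    have hsplit3 : K ⬝ᵥ (Ex A D).mulVec (A.mulVec (X t) + u 0 t • B)
        = K ⬝ᵥ (Ex A D * A).mulVec (X t) + u 0 t * (K ⬝ᵥ (Ex A D).mulVec B) := by
      rw [Matrix.mulVec_add, dotProduct_add, Matrix.mulVec_smul, dotProduct_smul,
        Matrix.mulVec_mulVec]
      simp
    rw [hsplit3] at hder
    simp only [Psi]
    rw [show t + D * ((1:ℝ) - 1) = t by ring, show D * (1:ℝ) = D by ring, ut0, eEx, hder]
    ring
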